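/- Suppose C : {0,1}^n → ({0,1}^ℓ)^m is a (1, c, ε)-quantum smooth code using b bits, let u = Σ_{i=0}^{b} binom(ℓ, i), and assume 2^{b+1} ≤ cu. Then for every i ∈ [n] there exist positive semidefinite matrices F, G0, G1 on ℂ^m ⊗ ℂ^{2^ℓ} with F + G0 + G1 = I such that for every x ∈ {0,1}^n: ⟨U(x), F U(x)⟩ = 1 − 2^{b+1}/(cu), and ⟨U(x), G_{x_i} U(x)⟩ ≥ (1/2 + ε) · 2^{b+1}/(cu). (That is, a three-outcome measurement on one copy of U(x) fails with probability exactly 1 − 2^{b+1}/(cu), and conditioned on not failing outputs x_i with probability at least 1/2 + ε.) -/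

import Mathlib

open ComplexOrder Matrix

/-- A quantum decoding tuple `(j0, j1, S0, S1)`: the two query positions and the two
sets of answer bits used. -/
structure QTuple (m ℓ : ℕ) where
  j0 : Fin m
  j1 : Fin m
  S0 : Finset (Fin ℓ)
  S1 : Finset (Fin ℓ)
deriving DecidableEq

/-- Quantum decoding tuples form a finite type. -/
def QTuple.equivProd (m ℓ : ℕ) :
    (Fin m × Fin m × Finset (Fin ℓ) × Finset (Fin ℓ)) ≃ QTuple m ℓ where
  toFun p := ⟨p.1, p.2.1, p.2.2.1, p.2.2.2⟩
  invFun ω := ⟨ω.j0, ω.j1, ω.S0, ω.S1⟩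
  left_inv _ := rfl
  right_inv _ := rfl

instance (m ℓ : ℕ) : Fintype (QTuple m ℓ) :=
  Fintype.ofEquiv _ (QTuple.equivProd m ℓ)

/-- `χ T a = (-1)^{T · a}`, the sign given by the inner product mod 2 of the
characteristic vector of `T` with the bit string `a`. -/
noncomputable def chi {ℓ : ℕ} (T : Finset (Fin ℓ)) (a : Fin ℓ → Bool) : ℂ :=
  (-1) ^ (T.filter fun k => a k = true).card

/-- The state resulting from the quantum query
`Q = (1/√2)(|j0⟩ ⊗ 2^{-b/2} Σ_{T ⊆ S0} (-1)^{T·y_{j0}} |T⟩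
          + |j1⟩ ⊗ 2^{-b/2} Σ_{T ⊆ S1} (-1)^{T·y_{j1}} |T⟩)`
to the string `y : ({0,1}^ℓ)^m`, as a vector in `ℂ^m ⊗ ℂ^{2^ℓ}` (indexed by the
standard basis `Fin m × Finset (Fin ℓ)`). -/
noncomputable def Qvec {m ℓ : ℕ} (b : ℕ) (j0 j1 : Fin m) (S0 S1 : Finset (Fin ℓ))
    (y : Fin m → Fin ℓ → Bool) : Fin m × Finset (Fin ℓ) → ℂ :=
  fun p =>
    ((1 / (Real.sqrt 2 * Real.sqrt (2 ^ b)) : ℝ) : ℂ) *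
      ((if p.1 = j0 ∧ p.2 ⊆ S0 then chi p.2 (y j0) else 0) +
       (if p.1 = j1 ∧ p.2 ⊆ S1 then chi p.2 (y j1) else 0))

/-- `D` (a distribution over quantum decoding tuples) together with the POVMs `E`
witnesses that `C` is a `(1, c, ε)`-quantum smooth code using `b` bits at index `i`. -/
def IsQSCDecoder {n m ℓ : ℕ} (b : ℕ) (c ε : ℝ)
    (C : (Fin n → Bool) → Fin m → Fin ℓ → Bool) (i : Fin n)
    (D : QTuple m ℓ → ℝ)
    (E : QTuple m ℓ → Bool →
      Matrix (Fin m × Finset (Fin ℓ)) (Fin m × Finset (Fin ℓ)) ℂ) : Prop :=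
  (∀ ω, 0 ≤ D ω) ∧ (∑ ω, D ω = 1) ∧
  (∀ ω, D ω ≠ 0 → ω.j0 ≠ ω.j1 ∧ ω.S0.card = b ∧ ω.S1.card = b ∧
    (E ω false).PosSemidef ∧ (E ω true).PosSemidef ∧ E ω false + E ω true = 1) ∧
  (∀ x, 1 / 2 + ε ≤
    ∑ ω, D ω *
      (star (Qvec b ω.j0 ω.j1 ω.S0 ω.S1 (C x)) ⬝ᵥ
        (E ω (x i) *ᵥ Qvec b ω.j0 ω.j1 ω.S0 ω.S1 (C x))).re) ∧
  (∀ j : Fin m,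
    ∑ ω ∈ Finset.univ.filter
      (fun ω : QTuple m ℓ => ω.j0 = j ∨ ω.j1 = j), D ω ≤ c / m)

/-- `C : {0,1}^n → ({0,1}^ℓ)^m` is a `(1, c, ε)`-quantum smooth code using `b` bits. -/
def IsQSC (n m ℓ b : ℕ) (c ε : ℝ)
    (C : (Fin n → Bool) → Fin m → Fin ℓ → Bool) : Prop :=
  ∀ i : Fin n, ∃ (D : QTuple m ℓ → ℝ)
    (E : QTuple m ℓ → Bool →
      Matrix (Fin m × Finset (Fin ℓ)) (Fin m × Finset (Fin ℓ)) ℂ),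
    IsQSCDecoder b c ε C i D E

/-- The state `U(x) = (1/√m) Σ_j |j⟩ ⊗ (1/√u) Σ_{|T| ≤ b} (-1)^{T·C(x)_j} |T⟩`
in `ℂ^m ⊗ ℂ^{2^ℓ}`, where `u = Σ_{i=0}^{b} binom(ℓ, i)`. -/
noncomputable def Uvec (m ℓ b : ℕ) (y : Fin m → Fin ℓ → Bool) :
    Fin m × Finset (Fin ℓ) → ℂ :=
  fun p =>
    if p.2.card ≤ b then
      ((1 / (Real.sqrt m *
        Real.sqrt (∑ i ∈ Finset.range (b + 1), (ℓ.choose i : ℝ))) : ℝ) : ℂ) *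
        chi p.2 (y p.1)
    else 0

-- ==================== auxiliary lemmas ====================
namespace S9

lemma chi_mul_self {ℓ : ℕ} (T : Finset (Fin ℓ)) (a : Fin ℓ → Bool) : chi T a * chi T a = 1 := by
  unfold chi; rw [← pow_add, ← two_mul, pow_mul]; norm_num

lemma star_chi {ℓ : ℕ} (T : Finset (Fin ℓ)) (a : Fin ℓ → Bool) : star (chi T a) = chi T a := by
  unfold chi; simp

lemma psd_real_smul {N : Type*} [Fintype N] [DecidableEq N] {M : Matrix N N ℂ}
    (hM : M.PosSemidef) {r : ℝ} (hr : 0 ≤ r) : ((r:ℂ) • M).PosSemidef := by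
  constructor
  · unfold Matrix.IsHermitian
    rw [conjTranspose_smul, hM.1.eq]
    congr 1
    simp [Complex.star_def, Complex.conj_ofReal]
  · intro x
    exact (hM.smul (Complex.zero_le_real.mpr hr)).2 x

lemma card_filter_card_le (ℓ b : ℕ) :
    (Finset.univ.filter fun T : Finset (Fin ℓ) => T.card ≤ b).card
      = ∑ i ∈ Finset.range (b+1), ℓ.choose i := by
  have h : (Finset.univ.filter fun T : Finset (Fin ℓ) => T.card ≤ b)
      = (Finset.range (b+1)).biUnion (fun i => Finset.univ.powersetCard i) := by
    ext T
    simp [Finset.mem_powersetCard, Nat.lt_succ_iff]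
  rw [h, Finset.card_biUnion]
  · refine Finset.sum_congr rfl fun i _ => ?_
    rw [Finset.card_powersetCard]
    simp
  · intro i _ j _ hij
    simp only [Finset.disjoint_left, Finset.mem_powersetCard]
    rintro T ⟨-, rfl⟩ ⟨-, h⟩
    exact hij h

variable {m ℓ : ℕ}

@[reducible] def pind (ω : QTuple m ℓ) (p : Fin m × Finset (Fin ℓ)) : Prop :=
  (p.1 = ω.j0 ∧ p.2 ⊆ ω.S0) ∨ (p.1 = ω.j1 ∧ p.2 ⊆ ω.S1)

instance (ω : QTuple m ℓ) : DecidablePred (pind ω) := fun _ => by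
  unfold pind; infer_instance

noncomputable def ind (ω : QTuple m ℓ) (p : Fin m × Finset (Fin ℓ)) : ℝ :=
  if pind ω p then 1 else 0

lemma ind_nonneg (ω : QTuple m ℓ) (p) : 0 ≤ ind ω p := by
  unfold ind; split <;> norm_num

noncomputable def Pmat (ω : QTuple m ℓ) :
    Matrix (Fin m × Finset (Fin ℓ)) (Fin m × Finset (Fin ℓ)) ℂ :=
  Matrix.diagonal fun p => ((ind ω p : ℝ) : ℂ)

lemma Pmat_herm (ω : QTuple m ℓ) : (Pmat ω)ᴴ = Pmat ω := by
  unfold Pmat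
  rw [diagonal_conjTranspose]
  exact congrArg _ (funext fun p => by
    simp [Function.comp, Complex.star_def, Complex.conj_ofReal])

lemma Pmat_mul_self (ω : QTuple m ℓ) : Pmat ω * Pmat ω = Pmat ω := by
  unfold Pmat
  rw [diagonal_mul_diagonal]
  exact congrArg _ (funext fun p => by unfold ind; split <;> simp)

lemma Pmat_mulVec (ω : QTuple m ℓ) (v : Fin m × Finset (Fin ℓ) → ℂ) :
    Pmat ω *ᵥ v = fun p => if pind ω p then v p else 0 := by
  funext p
  rw [Pmat, mulVec_diagonal]
  unfold ind
  split <;> simp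

lemma sum_mulVec' {ι N : Type*} [Fintype N] (s : Finset ι)
    (A : ι → Matrix N N ℂ) (v : N → ℂ) :
    (∑ i ∈ s, A i) *ᵥ v = ∑ i ∈ s, A i *ᵥ v := by
  classical
  induction s using Finset.cons_induction with
  | empty => simp [Matrix.zero_mulVec]
  | cons a s ha ih => simp [Finset.sum_insert, ha, Matrix.add_mulVec, ih]

lemma quad_sum {ι N : Type*} [Fintype N] (s : Finset ι)
    (A : ι → Matrix N N ℂ) (v : N → ℂ) :
    star v ⬝ᵥ ((∑ i ∈ s, A i) *ᵥ v) = ∑ i ∈ s, star v ⬝ᵥ (A i *ᵥ v) := by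
  rw [sum_mulVec']
  unfold dotProduct
  simp only [Finset.sum_apply, Finset.mul_sum]
  exact Finset.sum_comm

lemma quad_diag {N : Type*} [Fintype N] [DecidableEq N] (g : N → ℝ) (v : N → ℂ) :
    star v ⬝ᵥ ((Matrix.diagonal fun p => ((g p : ℝ) : ℂ)) *ᵥ v)
      = ∑ p, ((g p : ℝ) : ℂ) * (star (v p) * v p) := by
  unfold dotProduct
  refine Finset.sum_congr rfl fun p _ => ?_
  rw [mulVec_diagonal]
  simp only [Pi.star_apply]
  ring


lemma Uvec_star_mul (m ℓ b : ℕ) (y : Fin m → Fin ℓ → Bool) (p : Fin m × Finset (Fin ℓ)) :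
    star (Uvec m ℓ b y p) * Uvec m ℓ b y p
      = (((if p.2.card ≤ b then
          1 / ((m:ℝ) * ∑ i ∈ Finset.range (b+1), (ℓ.choose i : ℝ)) else 0) : ℝ) : ℂ) := by
  set usum : ℝ := ∑ i ∈ Finset.range (b+1), (ℓ.choose i : ℝ) with husum
  have hus : 0 ≤ usum := by positivity
  unfold Uvec
  split
  · set r : ℝ := 1 / (Real.sqrt m * Real.sqrt usum) with hrdef
    have hr : r^2 = 1/((m:ℝ)*usum) := by
      rw [hrdef, div_pow, one_pow, mul_pow, Real.sq_sqrt (by positivity), Real.sq_sqrt hus]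
    rw [star_mul', star_chi]
    have hsr : star ((r:ℂ)) = (r:ℂ) := by
      rw [Complex.star_def, Complex.conj_ofReal]
    rw [hsr]
    have : chi p.2 (y p.1) * ((r:ℂ) * chi p.2 (y p.1)) = (r:ℂ) * (chi p.2 (y p.1) * chi p.2 (y p.1)) := by ring
    rw [mul_assoc, this, chi_mul_self, mul_one, ← Complex.ofReal_mul, ← sq, hr]
  · simp

lemma sum_wgt (m ℓ b : ℕ) (r : ℝ) :
    ∑ p : Fin m × Finset (Fin ℓ), (if p.2.card ≤ b then r else 0)
      = (m : ℝ) * ((∑ i ∈ Finset.range (b+1), (ℓ.choose i : ℕ) : ℕ) : ℝ) * r := by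
  rw [Fintype.sum_prod_type]
  have hinner : ∀ j : Fin m, ∑ T : Finset (Fin ℓ), (if T.card ≤ b then r else 0)
      = ((∑ i ∈ Finset.range (b+1), (ℓ.choose i : ℕ) : ℕ) : ℝ) * r := by
    intro j
    rw [← Finset.sum_filter, Finset.sum_const, card_filter_card_le, nsmul_eq_mul]
  rw [Finset.sum_congr rfl (fun j _ => hinner j), Finset.sum_const]
  simp [nsmul_eq_mul, mul_assoc]

lemma sum_ind_one (m ℓ b : ℕ) (j0 : Fin m) (S0 : Finset (Fin ℓ)) (hS0 : S0.card = b) (r : ℝ) :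
    ∑ p : Fin m × Finset (Fin ℓ),
      (if p.1 = j0 ∧ p.2 ⊆ S0 then (1:ℝ) else 0) * (if p.2.card ≤ b then r else 0)
      = 2^b * r := by
  rw [Fintype.sum_prod_type]
  rw [Finset.sum_eq_single j0]
  · have : ∀ T : Finset (Fin ℓ),
        (if j0 = j0 ∧ T ⊆ S0 then (1:ℝ) else 0) * (if T.card ≤ b then r else 0)
        = if T ⊆ S0 then r else 0 := by
      intro T
      by_cases hT : T ⊆ S0
      · have hc : T.card ≤ b := le_trans (Finset.card_le_card hT) hS0.le
        simp [hT, hc]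
      · simp [hT]
    rw [Finset.sum_congr rfl (fun T _ => this T), ← Finset.sum_filter]
    have : (Finset.univ.filter fun T : Finset (Fin ℓ) => T ⊆ S0) = S0.powerset := by
      ext T; simp
    rw [this, Finset.sum_const, Finset.card_powerset, hS0, nsmul_eq_mul]
    push_cast
    ring
  · intro j _ hj
    exact Finset.sum_eq_zero fun T _ => by simp [hj]
  · intro h
    exact absurd (Finset.mem_univ _) h

end S9

/-- if `C` is a `(1, c, ε)`-quantum smooth code using `b` bits,
`u = Σ_{i=0}^{b} binom(ℓ,i)` and `2^{b+1} ≤ c·u`, then for every `i` there is a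
three-outcome POVM `(F, G0, G1)` on `ℂ^m ⊗ ℂ^{2^ℓ}` which, measured on one copy of
`U(x)`, fails (outcome `F`) with probability exactly `1 - 2^{b+1}/(cu)` and otherwise
outputs `x_i` with probability at least `(1/2 + ε) · 2^{b+1}/(cu)`. -/
theorem stmt9 (n m ℓ b : ℕ) (c ε : ℝ)
    (C : (Fin n → Bool) → Fin m → Fin ℓ → Bool)
    (h : IsQSC n m ℓ b c ε C)
    (u : ℕ) (hu : u = ∑ i ∈ Finset.range (b + 1), ℓ.choose i)
    (hcu : (2 ^ (b + 1) : ℝ) ≤ c * u) :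
    ∀ i : Fin n,
      ∃ (F : Matrix (Fin m × Finset (Fin ℓ)) (Fin m × Finset (Fin ℓ)) ℂ)
        (G : Bool → Matrix (Fin m × Finset (Fin ℓ)) (Fin m × Finset (Fin ℓ)) ℂ),
        F.PosSemidef ∧ (G false).PosSemidef ∧ (G true).PosSemidef ∧
        F + G false + G true = 1 ∧
        ∀ x : Fin n → Bool,
          star (Uvec m ℓ b (C x)) ⬝ᵥ (F *ᵥ Uvec m ℓ b (C x)) =
            ((1 - 2 ^ (b + 1) / (c * u) : ℝ) : ℂ) ∧
          (1 / 2 + ε) * (2 ^ (b + 1) / (c * u)) ≤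
            (star (Uvec m ℓ b (C x)) ⬝ᵥ (G (x i) *ᵥ Uvec m ℓ b (C x))).re := by
  classical
  intro i
  obtain ⟨D, E, hD0, hDsum, hprop, hcorr, hsmooth⟩ := h i
  set usum : ℝ := ∑ i ∈ Finset.range (b+1), (ℓ.choose i : ℝ) with husum
  have hUu : (u:ℝ) = usum := by rw [hu, husum]; push_cast; rfl
  have hu1 : 0 < u := by
    rw [hu]
    exact Finset.sum_pos' (fun _ _ => Nat.zero_le _)
      ⟨0, Finset.mem_range.2 (Nat.succ_pos b), by simp⟩
  have hup : (0:ℝ) < (u:ℝ) := by exact_mod_cast hu1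
  have h2p : (0:ℝ) < 2^(b+1) := by positivity
  have hcp : 0 < c := by nlinarith
  have hm : 0 < m := by
    by_contra hm0
    push_neg at hm0
    have hm0' : m = 0 := by omega
    subst hm0'
    have : IsEmpty (QTuple 0 ℓ) := ⟨fun ω => Fin.elim0 ω.j0⟩
    rw [Finset.univ_eq_empty, Finset.sum_empty] at hDsum
    exact absurd hDsum (by norm_num)
  have hmp : (0:ℝ) < m := by exact_mod_cast hm
  have husp : (0:ℝ) < usum := by rw [← hUu]; exact hup
  set κ : ℝ := (m:ℝ)/c with hκ
  have hκ0 : 0 ≤ κ := by positivity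
  set G : Bool → Matrix (Fin m × Finset (Fin ℓ)) (Fin m × Finset (Fin ℓ)) ℂ :=
    fun a => ∑ ω, ((κ * D ω : ℝ) : ℂ) • (S9.Pmat ω * E ω a * S9.Pmat ω) with hG
  -- PSD of G
  have hGpsd : ∀ a, (G a).PosSemidef := by
    intro a
    rw [hG]
    refine Finset.sum_induction _ _ (fun A B hA hB => hA.add hB) Matrix.PosSemidef.zero ?_
    intro ω _
    by_cases hD : D ω = 0
    · rw [hD, mul_zero, Complex.ofReal_zero, zero_smul]
      exact Matrix.PosSemidef.zero
    · obtain ⟨hj, hb0, hb1, hEf, hEt, hE1⟩ := hprop ω hD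
      have hE : (E ω a).PosSemidef := by cases a <;> assumption
      have hP : (S9.Pmat ω * E ω a * S9.Pmat ω).PosSemidef := by
        have := hE.conjTranspose_mul_mul_same (S9.Pmat ω)
        rwa [S9.Pmat_herm] at this
      exact S9.psd_real_smul hP (mul_nonneg hκ0 (hD0 ω))
  -- G false + G true is diagonal
  have hGsum : G false + G true
      = Matrix.diagonal (fun p => (((κ * ∑ ω, D ω * S9.ind ω p) : ℝ) : ℂ)) := by
    rw [hG, ← Finset.sum_add_distrib]
    have hterm : ∀ ω : QTuple m ℓ,
        ((κ * D ω : ℝ) : ℂ) • (S9.Pmat ω * E ω false * S9.Pmat ω)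
          + ((κ * D ω : ℝ) : ℂ) • (S9.Pmat ω * E ω true * S9.Pmat ω)
        = Matrix.diagonal (fun p => (((κ * D ω * S9.ind ω p) : ℝ) : ℂ)) := by
      intro ω
      by_cases hD : D ω = 0
      · simp [hD]
      · obtain ⟨hj, hb0, hb1, hEf, hEt, hE1⟩ := hprop ω hD
        rw [← smul_add]
        have hPP : S9.Pmat ω * E ω false * S9.Pmat ω + S9.Pmat ω * E ω true * S9.Pmat ω
            = S9.Pmat ω := by
          rw [← add_mul, ← mul_add, hE1, mul_one, S9.Pmat_mul_self]
        rw [hPP, S9.Pmat]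
        ext p q
        by_cases hpq : p = q
        · subst hpq
          simp only [Matrix.smul_apply, Matrix.diagonal_apply_eq, smul_eq_mul]
          push_cast
          ring
        · simp [Matrix.smul_apply, Matrix.diagonal_apply_ne _ hpq]
    rw [Finset.sum_congr rfl (fun ω _ => hterm ω)]
    ext p q
    by_cases hpq : p = q
    · subst hpq
      simp only [Matrix.sum_apply, Matrix.diagonal_apply_eq]
      push_cast
      rw [Finset.mul_sum]
      exact Finset.sum_congr rfl fun _ _ => by ring
    · simp [Matrix.sum_apply, Matrix.diagonal_apply_ne _ hpq]
  -- smoothness bound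
  have hsle : ∀ p : Fin m × Finset (Fin ℓ), ∑ ω, D ω * S9.ind ω p ≤ c / m := by
    intro p
    have h1 : ∑ ω, D ω * S9.ind ω p
        = ∑ ω ∈ Finset.univ.filter (fun ω : QTuple m ℓ => S9.pind ω p), D ω := by
      rw [Finset.sum_filter]
      refine Finset.sum_congr rfl fun ω _ => ?_
      unfold S9.ind
      split <;> simp
    rw [h1]
    refine le_trans
      (Finset.sum_le_sum_of_subset_of_nonneg ?_ (fun ω _ _ => hD0 ω)) (hsmooth p.1)
    intro ω hω
    simp only [Finset.mem_filter, Finset.mem_univ, true_and] at *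
    unfold S9.pind at hω
    rcases hω with ⟨h1', _⟩ | ⟨h1', _⟩
    · exact Or.inl h1'.symm
    · exact Or.inr h1'.symm
  -- F as diagonal
  have hF : (1 : Matrix (Fin m × Finset (Fin ℓ)) (Fin m × Finset (Fin ℓ)) ℂ)
        - G false - G true
      = Matrix.diagonal (fun p => (((1 - κ * ∑ ω, D ω * S9.ind ω p) : ℝ) : ℂ)) := by
    rw [sub_sub, hGsum]
    ext p q
    by_cases hpq : p = q
    · subst hpq
      simp only [Matrix.sub_apply, Matrix.one_apply_eq, Matrix.diagonal_apply_eq]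
      push_cast
      ring
    · simp [Matrix.sub_apply, Matrix.one_apply_ne hpq, Matrix.diagonal_apply_ne _ hpq]
  have hκcm : κ * (c/m) = 1 := by
    rw [hκ]
    field_simp
  have hFpsd : ((1 : Matrix (Fin m × Finset (Fin ℓ)) (Fin m × Finset (Fin ℓ)) ℂ)
      - G false - G true).PosSemidef := by
    rw [hF, Matrix.posSemidef_diagonal_iff]
    intro p
    rw [Complex.zero_le_real]
    have h1 := hsle p
    have h2 : κ * (∑ ω, D ω * S9.ind ω p) ≤ κ * (c/m) :=
      mul_le_mul_of_nonneg_left h1 hκ0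
    rw [hκcm] at h2
    linarith
  refine ⟨1 - G false - G true, G, hFpsd, hGpsd false, hGpsd true, by abel, ?_⟩
  intro x
  set y : Fin m → Fin ℓ → Bool := C x with hy
  set V : Fin m × Finset (Fin ℓ) → ℂ := Uvec m ℓ b y with hV
  -- quadratic form against diagonal
  have hq : ∀ g : (Fin m × Finset (Fin ℓ)) → ℝ,
      star V ⬝ᵥ ((Matrix.diagonal fun p => ((g p : ℝ):ℂ)) *ᵥ V)
      = (((∑ p, g p * (if p.2.card ≤ b then 1/((m:ℝ)*usum) else 0)) : ℝ) : ℂ) := by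
    intro g
    rw [S9.quad_diag, Complex.ofReal_sum]
    apply Finset.sum_congr rfl
    intro p _
    rw [hV, S9.Uvec_star_mul, ← husum]
    push_cast
    ring
  have hsum1 : ∑ p : Fin m × Finset (Fin ℓ),
      (if p.2.card ≤ b then 1/((m:ℝ)*usum) else 0) = 1 := by
    rw [S9.sum_wgt, ← hu, ← hUu]
    field_simp
  have hsum2 : ∀ ω : QTuple m ℓ, D ω ≠ 0 →
      ∑ p : Fin m × Finset (Fin ℓ),
        S9.ind ω p * (if p.2.card ≤ b then 1/((m:ℝ)*usum) else 0)
        = 2^(b+1) / ((m:ℝ) * usum) := by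
    intro ω hD
    obtain ⟨hj, hb0, hb1, -, -, -⟩ := hprop ω hD
    have hsplit : ∀ p : Fin m × Finset (Fin ℓ), S9.ind ω p
        = (if p.1 = ω.j0 ∧ p.2 ⊆ ω.S0 then (1:ℝ) else 0)
          + (if p.1 = ω.j1 ∧ p.2 ⊆ ω.S1 then (1:ℝ) else 0) := by
      intro p
      unfold S9.ind S9.pind
      by_cases h0 : p.1 = ω.j0 ∧ p.2 ⊆ ω.S0 <;>
        by_cases h1 : p.1 = ω.j1 ∧ p.2 ⊆ ω.S1
      · exact absurd (h0.1.symm.trans h1.1) hj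
      · rw [if_pos (Or.inl h0), if_pos h0, if_neg h1, add_zero]
      · rw [if_pos (Or.inr h1), if_neg h0, if_pos h1, zero_add]
      · rw [if_neg (by tauto), if_neg h0, if_neg h1, add_zero]
    rw [Finset.sum_congr rfl (fun p _ => by rw [hsplit p, add_mul])]
    rw [Finset.sum_add_distrib, S9.sum_ind_one m ℓ b ω.j0 ω.S0 hb0,
      S9.sum_ind_one m ℓ b ω.j1 ω.S1 hb1, pow_succ]
    ring
  constructor
  · -- F value
    rw [hF, hq]
    congr 1
    have e1 : ∀ p : Fin m × Finset (Fin ℓ),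
        (1 - κ * ∑ ω, D ω * S9.ind ω p) *
          (if p.2.card ≤ b then 1/((m:ℝ)*usum) else 0)
        = (if p.2.card ≤ b then 1/((m:ℝ)*usum) else 0)
          - κ * ∑ ω, (D ω * S9.ind ω p) *
            (if p.2.card ≤ b then 1/((m:ℝ)*usum) else 0) := by
      intro p
      rw [sub_mul, one_mul, mul_assoc, Finset.sum_mul]
    rw [Finset.sum_congr rfl (fun p _ => e1 p), Finset.sum_sub_distrib, hsum1,
      ← Finset.mul_sum, Finset.sum_comm]
    have hws : ∀ ω : QTuple m ℓ, ∑ p : Fin m × Finset (Fin ℓ),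
        (D ω * S9.ind ω p) * (if p.2.card ≤ b then 1/((m:ℝ)*usum) else 0)
        = D ω * (2^(b+1) / ((m:ℝ) * usum)) := by
      intro ω
      by_cases hD : D ω = 0
      · simp [hD]
      · rw [← hsum2 ω hD]
        conv_rhs => rw [Finset.mul_sum]
        exact Finset.sum_congr rfl fun p _ => by ring
    rw [Finset.sum_congr rfl (fun ω _ => hws ω), ← Finset.sum_mul, hDsum, one_mul]
    rw [hκ, ← hUu]
    field_simp
  · -- G value
    rw [hG, S9.quad_sum, Complex.re_sum]
    set α : ℝ := (Real.sqrt 2 * Real.sqrt (2^b)) / (Real.sqrt m * Real.sqrt usum) with hα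
    have hα2 : α * α = 2^(b+1) / ((m:ℝ)*usum) := by
      have a1 : Real.sqrt 2 * Real.sqrt 2 = 2 := Real.mul_self_sqrt (by norm_num)
      have a2 : Real.sqrt ((2:ℝ)^b) * Real.sqrt ((2:ℝ)^b) = (2:ℝ)^b :=
        Real.mul_self_sqrt (by positivity)
      have a3 : Real.sqrt (m:ℝ) * Real.sqrt (m:ℝ) = (m:ℝ) :=
        Real.mul_self_sqrt (by positivity)
      have a4 : Real.sqrt usum * Real.sqrt usum = usum :=
        Real.mul_self_sqrt (le_of_lt husp)
      have hnum : Real.sqrt 2 * Real.sqrt ((2:ℝ)^b) * (Real.sqrt 2 * Real.sqrt ((2:ℝ)^b))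
          = (2:ℝ)^(b+1) := by
        calc Real.sqrt 2 * Real.sqrt ((2:ℝ)^b) * (Real.sqrt 2 * Real.sqrt ((2:ℝ)^b))
            = (Real.sqrt 2 * Real.sqrt 2) * (Real.sqrt ((2:ℝ)^b) * Real.sqrt ((2:ℝ)^b)) := by
              ring
          _ = 2 * (2:ℝ)^b := by rw [a1, a2]
          _ = (2:ℝ)^(b+1) := by rw [pow_succ]; ring
      have hden : (Real.sqrt m * Real.sqrt usum) * (Real.sqrt m * Real.sqrt usum)
          = (m:ℝ)*usum := by
        calc (Real.sqrt m * Real.sqrt usum) * (Real.sqrt m * Real.sqrt usum)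
            = (Real.sqrt (m:ℝ) * Real.sqrt (m:ℝ)) * (Real.sqrt usum * Real.sqrt usum) := by
              ring
          _ = (m:ℝ) * usum := by rw [a3, a4]
      rw [hα, div_mul_div_comm, hnum, hden]
    have hterm : ∀ ω : QTuple m ℓ,
        (star V ⬝ᵥ ((((κ * D ω : ℝ) : ℂ) • (S9.Pmat ω * E ω (x i) * S9.Pmat ω)) *ᵥ V)).re
        = (2^(b+1)/(c*u)) * (D ω * (star (Qvec b ω.j0 ω.j1 ω.S0 ω.S1 y) ⬝ᵥ
            (E ω (x i) *ᵥ Qvec b ω.j0 ω.j1 ω.S0 ω.S1 y)).re) := by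
      intro ω
      by_cases hD : D ω = 0
      · simp [hD]
      · obtain ⟨hj, hb0, hb1, -, -, -⟩ := hprop ω hD
        have hPV : S9.Pmat ω *ᵥ V = (α:ℂ) • Qvec b ω.j0 ω.j1 ω.S0 ω.S1 y := by
          rw [S9.Pmat_mulVec]
          funext p
          have hαq : (α : ℂ) * ((1 / (Real.sqrt 2 * Real.sqrt (2 ^ b)) : ℝ) : ℂ)
              = ((1 / (Real.sqrt m * Real.sqrt usum) : ℝ) : ℂ) := by
            rw [← Complex.ofReal_mul]
            congr 1
            rw [hα]
            have hs2 : Real.sqrt 2 ≠ 0 := by positivity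
            have hs2b : Real.sqrt ((2:ℝ)^b) ≠ 0 := by positivity
            field_simp
          simp only [Pi.smul_apply, smul_eq_mul]
          unfold S9.pind
          by_cases h0 : p.1 = ω.j0 ∧ p.2 ⊆ ω.S0 <;>
            by_cases h1 : p.1 = ω.j1 ∧ p.2 ⊆ ω.S1
          · exact absurd (h0.1.symm.trans h1.1) hj
          · rw [if_pos (Or.inl h0)]
            have hcard : p.2.card ≤ b := hb0 ▸ Finset.card_le_card h0.2
            rw [hV]
            unfold Uvec Qvec
            rw [if_pos hcard, if_pos h0, if_neg h1, ← husum, h0.1, add_zero,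
              ← mul_assoc, hαq]
          · rw [if_pos (Or.inr h1)]
            have hcard : p.2.card ≤ b := hb1 ▸ Finset.card_le_card h1.2
            rw [hV]
            unfold Uvec Qvec
            rw [if_pos hcard, if_neg h0, if_pos h1, ← husum, h1.1, zero_add,
              ← mul_assoc, hαq]
          · rw [if_neg (by tauto)]
            simp [Qvec, h0, h1]
        have hvmul : star V ᵥ* S9.Pmat ω = star (S9.Pmat ω *ᵥ V) := by
          rw [star_mulVec, S9.Pmat_herm]
        have hsα : star ((α:ℝ):ℂ) = ((α:ℝ):ℂ) := by
          rw [Complex.star_def, Complex.conj_ofReal]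
        have hqf : star V ⬝ᵥ ((S9.Pmat ω * E ω (x i) * S9.Pmat ω) *ᵥ V)
            = ((α * α : ℝ):ℂ) * (star (Qvec b ω.j0 ω.j1 ω.S0 ω.S1 y) ⬝ᵥ
              (E ω (x i) *ᵥ Qvec b ω.j0 ω.j1 ω.S0 ω.S1 y)) := by
          rw [← Matrix.mulVec_mulVec, ← Matrix.mulVec_mulVec,
            dotProduct_mulVec, hvmul, hPV, star_smul, hsα,
            Matrix.mulVec_smul, dotProduct_smul, smul_dotProduct,
            smul_eq_mul, smul_eq_mul]
          push_cast
          ring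
        rw [smul_mulVec, dotProduct_smul, smul_eq_mul, hqf,
          ← mul_assoc, ← Complex.ofReal_mul, Complex.re_ofReal_mul]
        have hcoef : κ * D ω * (α * α) = (2^(b+1)/(c*u)) * D ω := by
          rw [hα2, hκ, ← hUu]
          field_simp
        rw [hcoef]
        ring
    rw [Finset.sum_congr rfl (fun ω _ => hterm ω), ← Finset.mul_sum]
    have hfac : (0:ℝ) < 2^(b+1)/(c*u) := by positivity
    have := hcorr x
    rw [← hy] at this
    calc (1/2 + ε) * (2^(b+1)/(c*u)) = (2^(b+1)/(c*u)) * (1/2 + ε) := by ring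
      _ ≤ (2^(b+1)/(c*u)) * ∑ ω, D ω * (star (Qvec b ω.j0 ω.j1 ω.S0 ω.S1 y) ⬝ᵥ
            (E ω (x i) *ᵥ Qvec b ω.j0 ω.j1 ω.S0 ω.S1 y)).re :=
        mul_le_mul_of_nonneg_left this (le_of_lt hfac)
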